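/- Let F be a field of characteristic zero over which every quaternion algebra has surjective norm (e.g. cohomological dimension ≤ 2), d ∈ F* \ F*², K = F(√d). Then for any d₁,...,d_{n-1} ∈ F* there exist dₙ ∈ F* and X ∈ GL(n,K) with X*X = diag(d₁,...,dₙ); moreover two such matrices X, Y with X*X = diag(d₁,...,dₙ), Y*Y = diag(d₁',...,dₙ') are related by Y = Q X D (Q unitary over F, D diagonal over K) iff dᵢ'/dᵢ ∈ N(K*) for all i. Consequently, the set of equivalence classes of such X is in bijection with (F*/N(K*))^{n-1}. -/

import Mathlib

open Matrix

namespace Stmt12Aux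
variable {F K : Type*} [Field F] [Field K] [Algebra F K]

theorem cstar_mul (σ : K ≃ₐ[F] K) {m : Type*} [Fintype m] (A B : Matrix m m K) :
    ((A * B).map σ)ᵀ = (B.map σ)ᵀ * (A.map σ)ᵀ := by
  have : (A * B).map (σ : K →+* K) = A.map σ * B.map σ := Matrix.map_mul
  rw [show (A * B).map (σ : K → K) = A.map σ * B.map σ from this, transpose_mul]

theorem cstar_one (σ : K ≃ₐ[F] K) {m : Type*} [Fintype m] [DecidableEq m] :
    (((1 : Matrix m m K)).map σ)ᵀ = 1 := by
  simp [Matrix.map_one σ (map_zero σ) (map_one σ)]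

theorem cstar_diagonal (σ : K ≃ₐ[F] K) {m : Type*} [Fintype m] [DecidableEq m] (f : m → K) :
    ((diagonal f).map σ)ᵀ = diagonal (fun i => σ (f i)) := by
  rw [Matrix.diagonal_map (map_zero σ), Matrix.diagonal_transpose]

theorem det_cstar (σ : K ≃ₐ[F] K) {m : Type*} [Fintype m] [DecidableEq m] (A : Matrix m m K) :
    ((A.map σ)ᵀ).det = σ A.det := by
  rw [det_transpose]
  exact (RingHom.map_det (σ : K →+* K) A).symm

theorem isUnit_det_of_cstar_mul (σ : K ≃ₐ[F] K) {m : Type*} [Fintype m] [DecidableEq m]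
    (A : Matrix m m K) (dv : m → K) (hdv : ∀ i, dv i ≠ 0)
    (h : (A.map σ)ᵀ * A = diagonal dv) : IsUnit A.det := by
  have : IsUnit (((A.map σ)ᵀ).det * A.det) := by
    rw [← det_mul, h, det_diagonal]
    exact (Finset.prod_ne_zero_iff.2 fun i _ => hdv i).isUnit
  exact isUnit_of_mul_isUnit_right this

theorem cstar_inv (σ : K ≃ₐ[F] K) {m : Type*} [Fintype m] [DecidableEq m] (A : Matrix m m K)
    (hA : IsUnit A.det) : ((A⁻¹).map σ)ᵀ = ((A.map σ)ᵀ)⁻¹ := by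
  symm
  apply Matrix.inv_eq_left_inv
  rw [← cstar_mul, Matrix.mul_nonsing_inv A hA, cstar_one]

def emb {p q N : Type*} (e : N → p ⊕ q) (A : Matrix p p K) (B : Matrix q q K) :
    Matrix N N K := (fromBlocks A 0 0 B).submatrix e e

theorem emb_mul {p q N : Type*} [Fintype p] [Fintype q] [Fintype N]
    (e : N ≃ p ⊕ q) (A A' : Matrix p p K) (B B' : Matrix q q K) :
    emb (e : N → p ⊕ q) A B * emb (e : N → p ⊕ q) A' B' = emb (e : N → p ⊕ q) (A * A') (B * B') := by
  rw [emb, emb, Matrix.submatrix_mul_equiv, fromBlocks_multiply]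
  simp [emb]

theorem emb_cstar (σ : K ≃ₐ[F] K) {p q N : Type*} (e : N → p ⊕ q)
    (A : Matrix p p K) (B : Matrix q q K) :
    ((emb e A B).map σ)ᵀ = emb e ((A.map σ)ᵀ) ((B.map σ)ᵀ) := by
  simp only [emb, ← submatrix_map, transpose_submatrix, fromBlocks_map,
    fromBlocks_transpose, Matrix.map_zero _ (map_zero σ), transpose_zero]

theorem emb_diagonal {p q N : Type*} [DecidableEq p] [DecidableEq q] [DecidableEq N]
    (e : N ≃ p ⊕ q) (f : p → K) (g : q → K) :
    emb (e : N → p ⊕ q) (diagonal f) (diagonal g) = diagonal (fun i => Sum.elim f g (e i)) := by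
  rw [emb, fromBlocks_diagonal, submatrix_diagonal_equiv]
  rfl

def fe (m : ℕ) : Fin (m + 1) ≃ Fin 1 ⊕ Fin m where
  toFun := Fin.cases (.inl 0) (.inr ·)
  invFun := Sum.elim (fun _ => 0) Fin.succ
  left_inv i := by induction i using Fin.cases <;> simp
  right_inv x := by
    rcases x with x | x
    · simp [Fin.fin_one_eq_zero x]
    · simp

@[simp] theorem fe_zero (m : ℕ) : fe m 0 = Sum.inl 0 := by simp [fe]
@[simp] theorem fe_succ (m : ℕ) (i : Fin m) : fe m i.succ = Sum.inr i := by simp [fe]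

@[simp] theorem fe_one (m : ℕ) : fe (m + 1) 1 = Sum.inr 0 := by
  rw [← Fin.succ_zero_eq_one, fe_succ]
theorem conj_norm (σ : K ≃ₐ[F] K) (d : F) (s : K) (hs : s * s = algebraMap F K d)
    (hσs : σ s = -s) (x y : F) :
    σ (algebraMap F K x + algebraMap F K y * s) * (algebraMap F K x + algebraMap F K y * s) =
      algebraMap F K (x ^ 2 - d * y ^ 2) := by
  rw [map_add, _root_.map_mul, hσs, σ.commutes, σ.commutes, map_sub, _root_.map_mul, map_pow,
    map_pow]
  ring_nf
  rw [show s ^ 2 = algebraMap F K d from by rw [sq, hs]]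

theorem exists_uv (σ : K ≃ₐ[F] K) (d : F) (hd0 : d ≠ 0) (s : K)
    (hs : s * s = algebraMap F K d) (hσs : σ s = -s)
    (hquat : ∀ a b c : F, a ≠ 0 → b ≠ 0 → c ≠ 0 →
      ∃ x y z w : F, (x ^ 2 - a * y ^ 2) - b * (z ^ 2 - a * w ^ 2) = c)
    (a b : F) (ha : a ≠ 0) (hb : b ≠ 0) :
    ∃ u v : K, algebraMap F K a * (σ u * u) + algebraMap F K b * (σ v * v) = 1 := by
  obtain ⟨x, y, z, w, h⟩ := hquat d (-(b * a⁻¹)) a⁻¹ hd0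
    (neg_ne_zero.2 (mul_ne_zero hb (inv_ne_zero ha))) (inv_ne_zero ha)
  refine ⟨algebraMap F K x + algebraMap F K y * s,
    algebraMap F K z + algebraMap F K w * s, ?_⟩
  rw [conj_norm σ d s hs hσs, conj_norm σ d s hs hσs, ← _root_.map_mul, ← _root_.map_mul,
    ← map_add, ← map_one (algebraMap F K)]
  congr 1
  have : a * (x ^ 2 - d * y ^ 2) + b * (z ^ 2 - d * w ^ 2)
      = a * ((x ^ 2 - d * y ^ 2) - -(b * a⁻¹) * (z ^ 2 - d * w ^ 2)) := by
    field_simp; ring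
  rw [this, h]
  field_simp

/-- the 2×2 congruence matrix, indexed by `Fin 1 ⊕ Fin 1`. -/
def tmat (σ : K ≃ₐ[F] K) (A B u v : K) : Matrix (Fin 1 ⊕ Fin 1) (Fin 1 ⊕ Fin 1) K :=
  fun i j => match i, j with
  | .inl _, .inl _ => A * σ u
  | .inl _, .inr _ => B * σ v
  | .inr _, .inl _ => v
  | .inr _, .inr _ => -u

theorem tmat_congr (σ : K ≃ₐ[F] K) (hσinv : ∀ x, σ (σ x) = x) (a b : F) (u v : K)
    (h1 : algebraMap F K a * (σ u * u) + algebraMap F K b * (σ v * v) = 1) :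
    ((tmat σ (algebraMap F K a) (algebraMap F K b) u v).map σ)ᵀ *
        diagonal (Sum.elim (fun _ => (1 : K)) (fun _ => algebraMap F K a * algebraMap F K b)) *
        tmat σ (algebraMap F K a) (algebraMap F K b) u v =
      diagonal (Sum.elim (fun _ => algebraMap F K a) (fun _ => algebraMap F K b)) := by
  ext i j
  rcases i with i | i <;> rcases j with j | j <;>
    simp [tmat, mul_apply, Fintype.sum_sum_type, diagonal, Fin.fin_one_eq_zero i,
      Fin.fin_one_eq_zero j, _root_.map_mul, σ.commutes, hσinv, map_neg] <;>
  first
    | linear_combination (algebraMap F K a) * h1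
    | linear_combination (algebraMap F K b) * h1
    | ring

theorem key (σ : K ≃ₐ[F] K) (hσinv : ∀ x, σ (σ x) = x) (d : F) (hd0 : d ≠ 0) (s : K)
    (hs : s * s = algebraMap F K d) (hσs : σ s = -s)
    (hquat : ∀ a b c : F, a ≠ 0 → b ≠ 0 → c ≠ 0 →
      ∃ x y z w : F, (x ^ 2 - a * y ^ 2) - b * (z ^ 2 - a * w ^ 2) = c) :
    ∀ (n : ℕ) (dv : Fin n → F), (∀ i, dv i ≠ 0) →
      (∃ z : K, z ≠ 0 ∧ σ z * z = algebraMap F K (∏ i, dv i)) →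
      ∃ X : Matrix (Fin n) (Fin n) K,
        (X.map σ)ᵀ * X = diagonal (fun i => algebraMap F K (dv i)) := by
  intro n
  induction n with
  | zero => exact fun dv _ _ => ⟨1, Subsingleton.elim _ _⟩
  | succ m IH =>
    cases m with
    | zero =>
      intro dv _ hz
      obtain ⟨z, _, hz2⟩ := hz
      refine ⟨diagonal fun _ => z, ?_⟩
      rw [cstar_diagonal, diagonal_mul_diagonal]
      have : (fun _ : Fin 1 => σ z * z) = fun i : Fin 1 => algebraMap F K (dv i) := by
        funext i
        rw [Fin.fin_one_eq_zero i, hz2, Fin.prod_univ_one]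
      rw [this]
    | succ k =>
      intro dv hdv hz
      set a := dv 0 with ha
      set b := dv 1 with hb
      set r : Fin k → F := fun i => dv i.succ.succ with hr
      set d'' : Fin (k + 1) → F := Fin.cons (a * b) r with hd''
      have hd''0 : ∀ i, d'' i ≠ 0 := by
        intro i
        induction i using Fin.cases with
        | zero => simpa [hd''] using mul_ne_zero (hdv 0) (hdv 1)
        | succ j => simpa [hd'', hr] using hdv j.succ.succ
      have hprod : ∏ i, d'' i = ∏ i, dv i := by
        rw [Fin.prod_univ_succ d'', Fin.prod_univ_succ dv, Fin.prod_univ_succ fun i : Fin (k+1) => dv i.succ]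
        simp [hd'', mul_assoc, ha, hb, hr]
      obtain ⟨X₀, hX₀⟩ := IH d'' hd''0 (by rwa [hprod])
      obtain ⟨u, v, huv⟩ := exists_uv σ d hd0 s hs hσs hquat a b (hdv 0) (hdv 1)
      set A := algebraMap F K a with hA
      set B := algebraMap F K b with hB
      set T := tmat σ A B u v with hT
      set e1 : Fin (k + 2) ≃ Fin 1 ⊕ Fin (k + 1) := fe (k + 1) with he1
      set e2 : Fin (k + 2) ≃ (Fin 1 ⊕ Fin 1) ⊕ Fin k :=
        (fe (k + 1)).trans
          (((Equiv.refl (Fin 1)).sumCongr (fe k)).trans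
            (Equiv.sumAssoc (Fin 1) (Fin 1) (Fin k)).symm) with he2
      refine ⟨emb (⇑e1) 1 X₀ * emb (⇑e2) T 1, ?_⟩
      have hmid : emb (⇑e1) (1 : Matrix (Fin 1) (Fin 1) K)
            (diagonal fun i => algebraMap F K (d'' i)) =
          emb (⇑e2) (diagonal (Sum.elim (fun _ => (1:K)) (fun _ => A * B)))
            (diagonal fun i => algebraMap F K (r i)) := by
        have hfun1 : (fun i => Sum.elim (fun _ => (1:K)) (fun i => algebraMap F K (d'' i)) (e1 i))
            = fun i => Sum.elim (Sum.elim (fun _ => (1:K)) (fun _ => A * B))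
                (fun i => algebraMap F K (r i)) (e2 i) := by
          funext i
          induction i using Fin.cases with
          | zero => simp [he1, he2]
          | succ j =>
            induction j using Fin.cases with
            | zero => simp [he1, he2, hd'', hA, hB, _root_.map_mul]
            | succ l => simp [he1, he2, hd'']
        rw [show (1 : Matrix (Fin 1) (Fin 1) K) = diagonal (fun _ => 1) from (diagonal_one).symm,
          emb_diagonal, emb_diagonal, hfun1]
      calc ((emb (⇑e1) 1 X₀ * emb (⇑e2) T 1).map σ)ᵀ * (emb (⇑e1) 1 X₀ * emb (⇑e2) T 1)
          = emb (⇑e2) ((T.map σ)ᵀ) 1 *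
              ((emb (⇑e1) 1 ((X₀.map σ)ᵀ) * emb (⇑e1) 1 X₀) * emb (⇑e2) T 1) := by
            rw [cstar_mul, emb_cstar, emb_cstar, cstar_one, cstar_one]
            noncomm_ring
        _ = emb (⇑e2) ((T.map σ)ᵀ) 1 *
              (emb (⇑e2) (diagonal (Sum.elim (fun _ => (1:K)) (fun _ => A * B)))
                (diagonal fun i => algebraMap F K (r i)) * emb (⇑e2) T 1) := by
            rw [emb_mul, one_mul, hX₀, hmid]
        _ = emb (⇑e2) (((T.map σ)ᵀ) * diagonal (Sum.elim (fun _ => (1:K)) (fun _ => A * B)) * T)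
              (1 * (diagonal fun i => algebraMap F K (r i)) * 1) := by
            rw [emb_mul, emb_mul]
            simp only [← Matrix.mul_assoc]
        _ = emb (⇑e2) (diagonal (Sum.elim (fun _ => A) (fun _ => B)))
              (diagonal fun i => algebraMap F K (r i)) := by
            rw [tmat_congr σ hσinv a b u v huv, one_mul, mul_one]
        _ = diagonal fun i => algebraMap F K (dv i) := by
            rw [emb_diagonal]
            have hfun2 : (fun i => Sum.elim (Sum.elim (fun _ => A) (fun _ => B))
                (fun i => algebraMap F K (r i)) (e2 i)) = fun i => algebraMap F K (dv i) := by
              funext i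
              induction i using Fin.cases with
              | zero => simp [he2, hA, ha]
              | succ j =>
                induction j using Fin.cases with
                | zero => simp [he2, hB, Fin.succ_zero_eq_one, hb]
                | succ l => simp [he2, hr]
            rw [hfun2]

theorem rel_iff (σ : K ≃ₐ[F] K) {m : Type*} [Fintype m] [DecidableEq m]
    (X Y : Matrix m m K) (hX : IsUnit X.det)
    (dX dY : m → F) (hdX : ∀ i, dX i ≠ 0) (hdY : ∀ i, dY i ≠ 0)
    (heX : (X.map σ)ᵀ * X = diagonal fun i => algebraMap F K (dX i))
    (heY : (Y.map σ)ᵀ * Y = diagonal fun i => algebraMap F K (dY i)) :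
    (∃ (Q : Matrix m m K) (e : m → K), (Q.map σ)ᵀ * Q = 1 ∧ IsUnit (diagonal e).det ∧
        Y = Q * X * diagonal e) ↔
      ∀ i, ∃ z : K, z ≠ 0 ∧ σ z * z = algebraMap F K (dY i * (dX i)⁻¹) := by
  have hinj : Function.Injective (algebraMap F K) := (algebraMap F K).injective
  have hane : ∀ x : F, x ≠ 0 → algebraMap F K x ≠ 0 := fun x hx => by
    simpa [map_eq_zero_iff _ hinj] using hx
  constructor
  · rintro ⟨Q, e, hQ, he, rfl⟩
    have he0 : ∀ j, e j ≠ 0 := by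
      have hp : (∏ j, e j) ≠ 0 := by
        have := he.ne_zero
        simpa [det_diagonal] using this
      exact fun j => Finset.prod_ne_zero_iff.1 hp j (Finset.mem_univ j)
    have hdd : (diagonal fun i => algebraMap F K (dY i))
        = diagonal fun i => σ (e i) * (algebraMap F K (dX i) * e i) := by
      rw [← heY, cstar_mul, cstar_mul, cstar_diagonal]
      simp only [Matrix.mul_assoc]
      rw [← Matrix.mul_assoc ((Q.map σ)ᵀ) Q, hQ, Matrix.one_mul,
        ← Matrix.mul_assoc ((X.map σ)ᵀ) X, heX, diagonal_mul_diagonal, diagonal_mul_diagonal]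
    intro i
    have hent := congrFun (congrFun hdd i) i
    simp only [diagonal_apply_eq] at hent
    refine ⟨e i, he0 i, ?_⟩
    rw [_root_.map_mul, map_inv₀]
    have hXne := hane _ (hdX i)
    rw [hent]
    field_simp
  · intro h
    choose z hz0 hz1 using h
    have hXe : ((X * diagonal z).map σ)ᵀ * (X * diagonal z)
        = diagonal fun i => algebraMap F K (dY i) := by
      rw [cstar_mul, cstar_diagonal]
      simp only [Matrix.mul_assoc]
      rw [← Matrix.mul_assoc ((X.map σ)ᵀ) X, heX, diagonal_mul_diagonal, diagonal_mul_diagonal]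
      have : (fun i => σ (z i) * (algebraMap F K (dX i) * z i))
          = fun i => algebraMap F K (dY i) := by
        funext i
        have h1 := hz1 i
        rw [_root_.map_mul, map_inv₀] at h1
        have hXne := hane _ (hdX i)
        field_simp at h1 ⊢
        linear_combination h1
      rw [this]
    set W := X * diagonal z with hW
    have hdetW : IsUnit W.det :=
      isUnit_det_of_cstar_mul σ W _ (fun i => hane _ (hdY i)) hXe
    have hcW : IsUnit ((W.map σ)ᵀ).det := by
      rw [det_cstar]
      exact hdetW.map (σ : K →+* K)
    refine ⟨Y * W⁻¹, z, ?_, ?_, ?_⟩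
    · calc ((Y * W⁻¹).map σ)ᵀ * (Y * W⁻¹)
          = ((W⁻¹).map σ)ᵀ * (((Y.map σ)ᵀ * Y) * W⁻¹) := by
            rw [cstar_mul]
            simp only [Matrix.mul_assoc]
        _ = ((W.map σ)ᵀ)⁻¹ * (((W.map σ)ᵀ * W) * W⁻¹) := by
            rw [heY, hXe, cstar_inv σ W hdetW]
        _ = 1 := by
            rw [Matrix.mul_assoc, Matrix.mul_nonsing_inv W hdetW, Matrix.mul_one,
              Matrix.nonsing_inv_mul _ hcW]
    · rw [det_diagonal]
      exact (Finset.prod_ne_zero_iff.2 fun i _ => hz0 i).isUnit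
    · rw [Matrix.mul_assoc, ← hW, Matrix.mul_assoc, Matrix.nonsing_inv_mul W hdetW,
        Matrix.mul_one]

end Stmt12Aux

open Stmt12Aux

/-- The subgroup of `F*` of norms from `K* = F(√d)*`, where `σ` is the conjugation. -/
def normSubgroup (F K : Type*) [Field F] [Field K] [Algebra F K] (σ : K ≃ₐ[F] K) :
    Subgroup Fˣ where
  carrier := {u : Fˣ | ∃ z : K, z ≠ 0 ∧ σ z * z = algebraMap F K (u : F)}
  one_mem' := ⟨1, one_ne_zero, by simp⟩
  mul_mem' := by
    rintro x y ⟨z, hz, hz2⟩ ⟨w, hw, hw2⟩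
    refine ⟨z * w, mul_ne_zero hz hw, ?_⟩
    rw [_root_.map_mul σ, Units.val_mul, _root_.map_mul, ← hz2, ← hw2]; ring
  inv_mem' := by
    rintro x ⟨z, hz, hz2⟩
    refine ⟨z⁻¹, inv_ne_zero hz, ?_⟩
    rw [map_inv₀, ← mul_inv, hz2, Units.val_inv_eq_inv_val, map_inv₀]

/-- over a field where every quaternion algebra has surjective norm, for any
`d₁,…,d_{n-1} ∈ F*` (here `dseq : Fin n → F`, matrices of size `n+1`) there are `dₙ` and a
cocycle `X` with `X*X = diag(d₁,…,dₙ)`; two cocycles are related by `Y = Q X D` iff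
`dᵢ'/dᵢ ∈ N(K*)` for all `i`; and the set of classes of cocycles is in bijection with
`(F*/N(K*))ⁿ`. -/
theorem stmt12 (F K : Type*) [Field F] [Field K] [CharZero F] [Algebra F K]
    (σ : K ≃ₐ[F] K) (hσinv : ∀ x, σ (σ x) = x)
    (hfix : ∀ x : K, σ x = x ↔ ∃ y : F, algebraMap F K y = x)
    (d : F) (hd0 : d ≠ 0) (hd : ¬ IsSquare d)
    (s : K) (hs : s * s = algebraMap F K d) (hσs : σ s = -s)
    (hgen : ∀ x : K, ∃ a b : F, x = algebraMap F K a + algebraMap F K b * s)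
    (hquat : ∀ a b c : F, a ≠ 0 → b ≠ 0 → c ≠ 0 →
      ∃ x y z w : F, (x ^ 2 - a * y ^ 2) - b * (z ^ 2 - a * w ^ 2) = c)
    (n : ℕ) :
    (∀ dseq : Fin n → F, (∀ i, dseq i ≠ 0) →
      ∃ dn : F, dn ≠ 0 ∧ ∃ X : Matrix (Fin (n + 1)) (Fin (n + 1)) K, IsUnit X.det ∧
        (X.map σ)ᵀ * X =
          Matrix.diagonal (Fin.snoc (fun i => algebraMap F K (dseq i)) (algebraMap F K dn))) ∧
    (∀ (X Y : Matrix (Fin (n + 1)) (Fin (n + 1)) K), IsUnit X.det → IsUnit Y.det →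
      ∀ dX dY : Fin (n + 1) → F, (∀ i, dX i ≠ 0) → (∀ i, dY i ≠ 0) →
        (X.map σ)ᵀ * X = Matrix.diagonal (fun i => algebraMap F K (dX i)) →
        (Y.map σ)ᵀ * Y = Matrix.diagonal (fun i => algebraMap F K (dY i)) →
        ((∃ (Q : Matrix (Fin (n + 1)) (Fin (n + 1)) K) (e : Fin (n + 1) → K),
            (Q.map σ)ᵀ * Q = 1 ∧ IsUnit (Matrix.diagonal e).det ∧
            Y = Q * X * Matrix.diagonal e) ↔
          ∀ i, ∃ z : K, z ≠ 0 ∧ σ z * z = algebraMap F K (dY i * (dX i)⁻¹))) ∧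
    Nonempty
      ((Quot fun (X Y : {A : Matrix (Fin (n + 1)) (Fin (n + 1)) K // IsUnit A.det ∧
            ∃ D : Fin (n + 1) → F, (∀ i, D i ≠ 0) ∧
              (A.map σ)ᵀ * A = Matrix.diagonal fun i => algebraMap F K (D i)}) =>
          ∃ (Q : Matrix (Fin (n + 1)) (Fin (n + 1)) K) (e : Fin (n + 1) → K),
            (Q.map σ)ᵀ * Q = 1 ∧ IsUnit (Matrix.diagonal e).det ∧
            Y.val = Q * X.val * Matrix.diagonal e) ≃
        (Fin n → Fˣ ⧸ normSubgroup F K σ)) := by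
  have hinj : Function.Injective (algebraMap F K) := (algebraMap F K).injective
  have hane : ∀ x : F, x ≠ 0 → algebraMap F K x ≠ 0 := fun x hx => by
    simpa [map_eq_zero_iff _ hinj] using hx
  have part1 : ∀ dseq : Fin n → F, (∀ i, dseq i ≠ 0) →
      ∃ dn : F, dn ≠ 0 ∧ ∃ X : Matrix (Fin (n + 1)) (Fin (n + 1)) K, IsUnit X.det ∧
        (X.map σ)ᵀ * X =
          Matrix.diagonal (Fin.snoc (fun i => algebraMap F K (dseq i)) (algebraMap F K dn)) := by
    intro dseq hds
    set dn := ∏ i, dseq i with hdn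
    have hdn0 : dn ≠ 0 := Finset.prod_ne_zero_iff.2 fun i _ => hds i
    set dv : Fin (n + 1) → F := Fin.snoc dseq dn with hdv
    have hdv0 : ∀ i, dv i ≠ 0 := by
      intro i
      induction i using Fin.lastCases with
      | last => simpa [hdv] using hdn0
      | cast j => simpa [hdv] using hds j
    have hprodv : ∏ i, dv i = dn * dn := by
      rw [Fin.prod_univ_castSucc]
      simp [hdv, hdn]
    obtain ⟨X, hX⟩ := key σ hσinv d hd0 s hs hσs hquat (n + 1) dv hdv0
      ⟨algebraMap F K dn, hane _ hdn0, by rw [σ.commutes, hprodv, _root_.map_mul]⟩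
    have hfeq : (fun i => algebraMap F K (dv i)) =
        Fin.snoc (fun i => algebraMap F K (dseq i)) (algebraMap F K dn) := by
      funext i
      induction i using Fin.lastCases with
      | last => simp [hdv]
      | cast j => simp [hdv]
    exact ⟨dn, hdn0, X,
      isUnit_det_of_cstar_mul σ X _ (fun i => hane _ (hdv0 i)) hX, by rw [hX, hfeq]⟩
  refine ⟨part1, fun X Y hX hY dX dY hdX hdY heX heY =>
    rel_iff σ X Y hX dX dY hdX hdY heX heY, ?_⟩
  -- Part 3
  have hDex : ∀ A : {A : Matrix (Fin (n + 1)) (Fin (n + 1)) K // IsUnit A.det ∧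
      ∃ D : Fin (n + 1) → F, (∀ i, D i ≠ 0) ∧
        (A.map σ)ᵀ * A = Matrix.diagonal fun i => algebraMap F K (D i)},
      ∃ D : Fin (n + 1) → F, (∀ i, D i ≠ 0) ∧
        (A.val.map σ)ᵀ * A.val = Matrix.diagonal fun i => algebraMap F K (D i) :=
    fun A => A.2.2
  choose Dof hDof1 hDof2 using hDex
  have hDuniq : ∀ A D', ((A.val.map σ)ᵀ * A.val = Matrix.diagonal fun i => algebraMap F K (D' i))
      → Dof A = D' := by
    intro A D' h'
    funext i
    have h2 := congrFun (congrFun ((hDof2 A).symm.trans h') i) i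
    simp only [diagonal_apply_eq] at h2
    exact hinj h2
  have hprodmem : ∀ A, (∏ i : Fin (n + 1), Units.mk0 (Dof A i) (hDof1 A i)) ∈
      normSubgroup F K σ := by
    intro A
    refine ⟨A.val.det, A.2.1.ne_zero, ?_⟩
    have h1 : σ A.val.det * A.val.det = ((A.val.map σ)ᵀ * A.val).det := by
      rw [det_mul, det_cstar]
    have h2 : ((∏ i : Fin (n + 1), Units.mk0 (Dof A i) (hDof1 A i) : Fˣ) : F)
        = ∏ i : Fin (n + 1), Dof A i := by
      rw [← Units.coeHom_apply, map_prod]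
      simp
    rw [h1, hDof2 A, det_diagonal, h2, map_prod]
  set φ : {A : Matrix (Fin (n + 1)) (Fin (n + 1)) K // IsUnit A.det ∧
      ∃ D : Fin (n + 1) → F, (∀ i, D i ≠ 0) ∧
        (A.map σ)ᵀ * A = Matrix.diagonal fun i => algebraMap F K (D i)} →
      (Fin n → Fˣ ⧸ normSubgroup F K σ) :=
    fun A i => QuotientGroup.mk (Units.mk0 (Dof A i.castSucc) (hDof1 A i.castSucc)) with hφ
  have hresp : ∀ A B, (∃ (Q : Matrix (Fin (n + 1)) (Fin (n + 1)) K) (e : Fin (n + 1) → K),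
      (Q.map σ)ᵀ * Q = 1 ∧ IsUnit (Matrix.diagonal e).det ∧
      B.val = Q * A.val * Matrix.diagonal e) → φ A = φ B := by
    intro A B hrel
    have hratios := (rel_iff σ A.val B.val A.2.1 (Dof A) (Dof B) (hDof1 A) (hDof1 B)
      (hDof2 A) (hDof2 B)).mp hrel
    funext i
    refine (QuotientGroup.eq).2 ?_
    obtain ⟨z, hz0, hz1⟩ := hratios i.castSucc
    refine ⟨z, hz0, ?_⟩
    rw [hz1]
    congr 1
    simp [mul_comm]
  refine ⟨Equiv.ofBijective (Quot.lift φ hresp) ⟨?_, ?_⟩⟩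
  · -- injective
    intro x y h
    induction x using Quot.ind with | _ A => ?_
    induction y using Quot.ind with | _ B => ?_
    have hφeq : φ A = φ B := h
    have hc : ∀ i : Fin n,
        (Units.mk0 (Dof A i.castSucc) (hDof1 A i.castSucc))⁻¹ *
          Units.mk0 (Dof B i.castSucc) (hDof1 B i.castSucc) ∈ normSubgroup F K σ :=
      fun i => (QuotientGroup.eq).1 (congrFun hφeq i)
    have hlastmem : (Units.mk0 (Dof A (Fin.last n)) (hDof1 A (Fin.last n)))⁻¹ *
        Units.mk0 (Dof B (Fin.last n)) (hDof1 B (Fin.last n)) ∈ normSubgroup F K σ := by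
      have m1 : (∏ i : Fin (n + 1), Units.mk0 (Dof A i) (hDof1 A i))⁻¹ *
          (∏ i : Fin (n + 1), Units.mk0 (Dof B i) (hDof1 B i)) ∈ normSubgroup F K σ :=
        Subgroup.mul_mem _ (Subgroup.inv_mem _ (hprodmem A)) (hprodmem B)
      have m2 : (∏ i : Fin n, (Units.mk0 (Dof A i.castSucc) (hDof1 A i.castSucc))⁻¹ *
          Units.mk0 (Dof B i.castSucc) (hDof1 B i.castSucc)) ∈ normSubgroup F K σ :=
        Subgroup.prod_mem _ fun i _ => hc i
      have hvA : ((∏ i : Fin (n + 1), Units.mk0 (Dof A i) (hDof1 A i) : Fˣ) : F)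
          = ∏ i : Fin (n + 1), Dof A i := by
        rw [← Units.coeHom_apply, map_prod]; simp
      have hvB : ((∏ i : Fin (n + 1), Units.mk0 (Dof B i) (hDof1 B i) : Fˣ) : F)
          = ∏ i : Fin (n + 1), Dof B i := by
        rw [← Units.coeHom_apply, map_prod]; simp
      have hvC : ((∏ i : Fin n, (Units.mk0 (Dof A i.castSucc) (hDof1 A i.castSucc))⁻¹ *
            Units.mk0 (Dof B i.castSucc) (hDof1 B i.castSucc) : Fˣ) : F)
          = (∏ i : Fin n, Dof A i.castSucc)⁻¹ * ∏ i : Fin n, Dof B i.castSucc := by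
        rw [← Units.coeHom_apply, map_prod]
        simp [Finset.prod_mul_distrib, Finset.prod_inv_distrib]
      have hpA : (∏ i : Fin n, Dof A i.castSucc) ≠ 0 :=
        Finset.prod_ne_zero_iff.2 fun i _ => hDof1 A _
      have hpB : (∏ i : Fin n, Dof B i.castSucc) ≠ 0 :=
        Finset.prod_ne_zero_iff.2 fun i _ => hDof1 B _
      have key : (Units.mk0 (Dof A (Fin.last n)) (hDof1 A (Fin.last n)))⁻¹ *
          Units.mk0 (Dof B (Fin.last n)) (hDof1 B (Fin.last n)) =
          ((∏ i : Fin (n + 1), Units.mk0 (Dof A i) (hDof1 A i))⁻¹ *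
            (∏ i : Fin (n + 1), Units.mk0 (Dof B i) (hDof1 B i))) *
          (∏ i : Fin n, (Units.mk0 (Dof A i.castSucc) (hDof1 A i.castSucc))⁻¹ *
            Units.mk0 (Dof B i.castSucc) (hDof1 B i.castSucc))⁻¹ := by
        apply Units.ext
        simp only [Units.val_mul, Units.val_inv_eq_inv_val, Units.val_mk0, hvA, hvB, hvC]
        rw [Fin.prod_univ_castSucc (Dof A), Fin.prod_univ_castSucc (Dof B)]
        have cancel : ∀ x P Q : F, P ≠ 0 → Q ≠ 0 → x = ((x * Q) * P) * Q⁻¹ * P⁻¹ := by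
          intro x P Q hP hQ
          field_simp
        have hAl := hDof1 A (Fin.last n)
        have hBl := hDof1 B (Fin.last n)
        field_simp
      rw [key]
      exact Subgroup.mul_mem _ m1 (Subgroup.inv_mem _ m2)
    apply Quot.sound
    refine (rel_iff σ A.val B.val A.2.1 (Dof A) (Dof B) (hDof1 A) (hDof1 B)
      (hDof2 A) (hDof2 B)).mpr ?_
    intro i
    induction i using Fin.lastCases with
    | last =>
      obtain ⟨z, hz0, hz1⟩ := hlastmem
      refine ⟨z, hz0, ?_⟩
      rw [hz1]
      congr 1
      simp [mul_comm]
    | cast j =>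
      obtain ⟨z, hz0, hz1⟩ := hc j
      refine ⟨z, hz0, ?_⟩
      rw [hz1]
      congr 1
      simp [mul_comm]
  · -- surjective
    intro g
    choose u hu using fun i => QuotientGroup.mk_surjective (g i)
    obtain ⟨dn, hdn0, X, hXdet, hXX⟩ := part1 (fun i => (u i : F)) (fun i => (u i).ne_zero)
    set Dv : Fin (n + 1) → F := Fin.snoc (fun i => (u i : F)) dn with hDvdef
    have hfeq0 : (Fin.snoc (fun i => algebraMap F K ((u i : F)))
          (algebraMap F K dn) : Fin (n + 1) → K) = fun i => algebraMap F K (Dv i) := by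
      funext i
      induction i using Fin.lastCases with
      | last => simp [hDvdef]
      | cast j => simp [hDvdef]
    have hfeq := congrArg Matrix.diagonal hfeq0
    have hDv0 : ∀ i, Dv i ≠ 0 := by
      intro i
      induction i using Fin.lastCases with
      | last => simpa [hDvdef] using hdn0
      | cast j => simpa [hDvdef] using (u j).ne_zero
    set A : {A : Matrix (Fin (n + 1)) (Fin (n + 1)) K // IsUnit A.det ∧
        ∃ D : Fin (n + 1) → F, (∀ i, D i ≠ 0) ∧
          (A.map σ)ᵀ * A = Matrix.diagonal fun i => algebraMap F K (D i)} :=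
      ⟨X, hXdet, Dv, hDv0, by rw [hXX, hfeq]⟩ with hA
    refine ⟨Quot.mk _ A, ?_⟩
    have hDA : Dof A = Dv :=
      hDuniq A _ (by rw [hA]; rw [hXX, hfeq])
    show φ A = g
    funext i
    have hu' : Units.mk0 (Dof A i.castSucc) (hDof1 A i.castSucc) = u i :=
      Units.ext (by simp only [Units.val_mk0]; rw [hDA]; simp [hDvdef])
    rw [hφ]
    simp only
    rw [hu']
    exact hu i
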